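/- Let G(∘) and G(∗) be two group structures on a finite set G of cardinality n > 7 with dist(G(∘),G(∗)) ≤ 6n − 18, where G(∘) and G(∗) are isomorphic. Then the identity elements of G(∘) and G(∗) coincide: 1_{G(∘)} = 1_{G(∗)}. -/
import Mathlib

open Finset
namespace Drapal
variable {G : Type*}

theorem gassoc (g : Group G) (a b c : G) : g.mul (g.mul a b) c = g.mul a (g.mul b c) := by
  letI := g; exact mul_assoc a b c
theorem gone_mul (g : Group G) (a : G) : g.mul g.one a = a := by letI := g; exact one_mul a
theorem gmul_one (g : Group G) (a : G) : g.mul a g.one = a := by letI := g; exact mul_one a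
theorem gmul_inv (g : Group G) (a : G) : g.mul a (g.inv a) = g.one := by
  letI := g; exact mul_inv_cancel a
theorem ginv_mul (g : Group G) (a : G) : g.mul (g.inv a) a = g.one := by
  letI := g; exact inv_mul_cancel a
theorem glcancel (g : Group G) {a b c : G} (h : g.mul a b = g.mul a c) : b = c := by
  letI := g; exact mul_left_cancel h
theorem grcancel (g : Group G) {a b c : G} (h : g.mul a c = g.mul b c) : a = b := by
  letI := g; exact mul_right_cancel h

/-- Row version: if (u,v) is an agreeing cell with s-value ∈ {1ₛ, 1ₜ}, and cells
(v,c), (u, v∘c) also agree, then the identities coincide. -/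
theorem core_row (s t : Group G) (hne : s.one ≠ t.one) {u v c : G}
    (hval : s.mul u v = s.one ∨ s.mul u v = t.one)
    (hagr : s.mul u v = t.mul u v)
    (h1 : s.mul v c = t.mul v c)
    (h2 : s.mul u (s.mul v c) = t.mul u (s.mul v c)) : False := by
  rcases hval with hv | hv
  · apply hne
    apply grcancel t (c := c)
    calc t.mul s.one c = t.mul (t.mul u v) c := by rw [← hagr, hv]
      _ = t.mul u (t.mul v c) := gassoc t u v c
      _ = t.mul u (s.mul v c) := by rw [h1]
      _ = s.mul u (s.mul v c) := h2.symm
      _ = s.mul (s.mul u v) c := (gassoc s u v c).symm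
      _ = s.mul s.one c := by rw [hv]
      _ = c := gone_mul s c
      _ = t.mul t.one c := (gone_mul t c).symm
  · apply hne
    have h3 : s.mul t.one c = s.mul s.one c := by
      calc s.mul t.one c = s.mul (s.mul u v) c := by rw [hv]
        _ = s.mul u (s.mul v c) := gassoc s u v c
        _ = t.mul u (s.mul v c) := h2
        _ = t.mul u (t.mul v c) := by rw [h1]
        _ = t.mul (t.mul u v) c := (gassoc t u v c).symm
        _ = t.mul (s.mul u v) c := by rw [hagr]
        _ = t.mul t.one c := by rw [hv]
        _ = c := gone_mul t c
        _ = s.mul s.one c := (gone_mul s c).symm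
    exact (grcancel s h3).symm

/-- Column version. -/
theorem core_col (s t : Group G) (hne : s.one ≠ t.one) {u v c : G}
    (hval : s.mul u v = s.one ∨ s.mul u v = t.one)
    (hagr : s.mul u v = t.mul u v)
    (h1 : s.mul c u = t.mul c u)
    (h2 : s.mul (s.mul c u) v = t.mul (s.mul c u) v) : False := by
  rcases hval with hv | hv
  · apply hne
    apply glcancel t (a := c)
    calc t.mul c s.one = t.mul c (t.mul u v) := by rw [← hagr, hv]
      _ = t.mul (t.mul c u) v := (gassoc t c u v).symm
      _ = t.mul (s.mul c u) v := by rw [h1]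
      _ = s.mul (s.mul c u) v := h2.symm
      _ = s.mul c (s.mul u v) := gassoc s c u v
      _ = s.mul c s.one := by rw [hv]
      _ = c := gmul_one s c
      _ = t.mul c t.one := (gmul_one t c).symm
  · apply hne
    have h3 : s.mul c t.one = s.mul c s.one := by
      calc s.mul c t.one = s.mul c (s.mul u v) := by rw [hv]
        _ = s.mul (s.mul c u) v := (gassoc s c u v).symm
        _ = t.mul (s.mul c u) v := h2
        _ = t.mul (t.mul c u) v := by rw [h1]
        _ = t.mul c (t.mul u v) := gassoc t c u v
        _ = t.mul c (s.mul u v) := by rw [hagr]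
        _ = t.mul c t.one := by rw [hv]
        _ = c := gmul_one t c
        _ = s.mul c s.one := (gmul_one s c).symm
    exact (glcancel s h3).symm

/-- 2-to-1 counting. -/
theorem card_le_two_mul {α β : Type*} [DecidableEq α] [DecidableEq β] {W : Finset α}
    {R : Finset β} {φ : α → β}
    (hmaps : ∀ a ∈ W, φ a ∈ R)
    (hfib : ∀ b, ∃ x y, ∀ a ∈ W, φ a = b → a = x ∨ a = y) :
    W.card ≤ 2 * R.card := by
  rw [card_eq_sum_card_fiberwise hmaps]
  calc ∑ b ∈ R, (W.filter fun a => φ a = b).card ≤ ∑ _b ∈ R, 2 := by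
        apply sum_le_sum
        intro b _
        obtain ⟨x, y, hxy⟩ := hfib b
        refine (card_le_card (fun a ha => ?_)).trans
          ((card_insert_le x {y}).trans (by simp) : ({x, y} : Finset α).card ≤ 2)
        obtain ⟨haW, hab⟩ := mem_filter.1 ha
        rcases hxy a haW hab with h | h <;> simp [h]
    _ = 2 * R.card := by rw [sum_const, smul_eq_mul, mul_comm]

variable [Fintype G] [DecidableEq G]

/-- interior elements -/
def II (s t : Group G) : Finset G := Finset.univ \ {s.one, t.one}

theorem mem_II {s t : Group G} {a : G} : a ∈ II s t ↔ a ≠ s.one ∧ a ≠ t.one := by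
  simp [II]

theorem II_card {s t : Group G} (hne : s.one ≠ t.one) :
    (II s t).card + 2 = Fintype.card G := by
  have h2 : ({s.one, t.one} : Finset G).card = 2 := by
    rw [card_insert_of_notMem (by simp [hne]), card_singleton]
  have hle : ({s.one, t.one} : Finset G).card ≤ Fintype.card G := card_le_univ ({s.one, t.one} : Finset G)
  have h3 : (II s t).card = (Finset.univ : Finset G).card - 2 := by
    rw [II, card_sdiff_of_subset (subset_univ _), h2]
  rw [card_univ] at h3
  omega

/-- disagreement cells in rows u,w restricted to interior columns -/
def RR (s t : Group G) (u w : G) : Finset (G × G) :=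
  (({u, w} : Finset G) ×ˢ II s t).filter fun p => s.mul p.1 p.2 ≠ t.mul p.1 p.2

def CC (s t : Group G) (u w : G) : Finset (G × G) :=
  (II s t ×ˢ ({u, w} : Finset G)).filter fun p => s.mul p.1 p.2 ≠ t.mul p.1 p.2

/-- the set of valid c's for the row argument -/
theorem W_card (s t : Group G) (hne : s.one ≠ t.one) (v : G) :
    (II s t).card ≤ ((II s t).filter fun c => s.mul v c ∈ II s t).card + 2 := by
  have hsub : II s t ⊆ ((II s t).filter fun c => s.mul v c ∈ II s t)
      ∪ {s.inv v, s.mul (s.inv v) t.one} := by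
    intro c hc
    by_cases h1 : c = s.inv v
    · exact mem_union_right _ (by simp [h1])
    by_cases h2 : c = s.mul (s.inv v) t.one
    · exact mem_union_right _ (by simp [h2])
    refine mem_union_left _ (mem_filter.2 ⟨hc, mem_II.2 ⟨fun he => h1 ?_, fun hf => h2 ?_⟩⟩)
    · exact glcancel s (he.trans (gmul_inv s v).symm)
    · refine glcancel s (hf.trans ?_)
      rw [← gassoc s, gmul_inv s, gone_mul s]
  have := (card_le_card hsub).trans (card_union_le _ _)
  have h2 : ({s.inv v, s.mul (s.inv v) t.one} : Finset G).card ≤ 2 :=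
    (card_insert_le _ _).trans (by simp)
  omega

theorem W'_card (s t : Group G) (hne : s.one ≠ t.one) (u : G) :
    (II s t).card ≤ ((II s t).filter fun c => s.mul c u ∈ II s t).card + 2 := by
  have hsub : II s t ⊆ ((II s t).filter fun c => s.mul c u ∈ II s t)
      ∪ {s.inv u, s.mul t.one (s.inv u)} := by
    intro c hc
    by_cases h1 : c = s.inv u
    · exact mem_union_right _ (by simp [h1])
    by_cases h2 : c = s.mul t.one (s.inv u)
    · exact mem_union_right _ (by simp [h2])
    refine mem_union_left _ (mem_filter.2 ⟨hc, mem_II.2 ⟨fun he => h1 ?_, fun hf => h2 ?_⟩⟩)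
    · exact grcancel s (he.trans (ginv_mul s u).symm)
    · refine grcancel s (hf.trans ?_)
      rw [gassoc s, ginv_mul s, gmul_one s]
  have := (card_le_card hsub).trans (card_union_le _ _)
  have h2 : ({s.inv u, s.mul t.one (s.inv u)} : Finset G).card ≤ 2 :=
    (card_insert_le _ _).trans (by simp)
  omega

theorem row_bound (s t : Group G) (hne : s.one ≠ t.one) {u v : G} (huv : u ≠ v)
    (hval : s.mul u v = s.one ∨ s.mul u v = t.one)
    (hagr : s.mul u v = t.mul u v) :
    Fintype.card G ≤ (RR s t u v).card + 4 := by
  classical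
  set W : Finset G := (II s t).filter (fun c => s.mul v c ∈ II s t) with hW
  set φ : G → G × G := fun c => if s.mul v c = t.mul v c then (u, s.mul v c) else (v, c) with hφ
  have hmaps : ∀ c ∈ W, φ c ∈ RR s t u v := by
    intro c hc
    obtain ⟨hcI, hvc⟩ := mem_filter.1 hc
    by_cases h : s.mul v c = t.mul v c
    · have hd : s.mul u (s.mul v c) ≠ t.mul u (s.mul v c) :=
        fun h2 => core_row s t hne hval hagr h h2
      simp only [hφ, if_pos h]
      exact mem_filter.2 ⟨mem_product.2 ⟨by simp, hvc⟩, hd⟩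
    · simp only [hφ, if_neg h]
      exact mem_filter.2 ⟨mem_product.2 ⟨by simp, hcI⟩, h⟩
  have hinj : Set.InjOn φ W := by
    intro c hc c' hc' hcc
    by_cases h : s.mul v c = t.mul v c <;> by_cases h' : s.mul v c' = t.mul v c' <;>
      simp only [hφ, if_pos, if_neg, h, h', if_true, if_false, Prod.mk.injEq] at hcc
    · exact glcancel t hcc.2
    · exact absurd hcc.1 huv
    · exact absurd hcc.1.symm huv
    · exact hcc.2
  have h1 : W.card ≤ (RR s t u v).card := card_le_card_of_injOn φ hmaps hinj
  have h2 : (II s t).card ≤ W.card + 2 := W_card s t hne v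
  have h3 := II_card hne
  omega

theorem col_bound (s t : Group G) (hne : s.one ≠ t.one) {u v : G} (huv : u ≠ v)
    (hval : s.mul u v = s.one ∨ s.mul u v = t.one)
    (hagr : s.mul u v = t.mul u v) :
    Fintype.card G ≤ (CC s t u v).card + 4 := by
  classical
  set W : Finset G := (II s t).filter (fun c => s.mul c u ∈ II s t) with hW
  set φ : G → G × G := fun c => if s.mul c u = t.mul c u then (s.mul c u, v) else (c, u) with hφ
  have hmaps : ∀ c ∈ W, φ c ∈ CC s t u v := by
    intro c hc
    obtain ⟨hcI, hvc⟩ := mem_filter.1 hc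
    by_cases h : s.mul c u = t.mul c u
    · have hd : s.mul (s.mul c u) v ≠ t.mul (s.mul c u) v :=
        fun h2 => core_col s t hne hval hagr h h2
      simp only [hφ, if_pos h]
      exact mem_filter.2 ⟨mem_product.2 ⟨hvc, by simp⟩, hd⟩
    · simp only [hφ, if_neg h]
      exact mem_filter.2 ⟨mem_product.2 ⟨hcI, by simp⟩, h⟩
  have hinj : Set.InjOn φ W := by
    intro c hc c' hc' hcc
    by_cases h : s.mul c u = t.mul c u <;> by_cases h' : s.mul c' u = t.mul c' u <;>
      simp only [hφ, if_pos, if_neg, h, h', if_true, if_false, Prod.mk.injEq] at hcc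
    · exact grcancel t hcc.1
    · exact absurd hcc.2 (Ne.symm huv)
    · exact absurd hcc.2.symm (Ne.symm huv)
    · exact hcc.1
  have h1 : W.card ≤ (CC s t u v).card := card_le_card_of_injOn φ hmaps hinj
  have h2 : (II s t).card ≤ W.card + 2 := W'_card s t hne u
  have h3 := II_card hne
  omega


theorem row_bound_diag (s t : Group G) (hne : s.one ≠ t.one) {u : G}
    (hval : s.mul u u = s.one ∨ s.mul u u = t.one)
    (hagr : s.mul u u = t.mul u u) :
    Fintype.card G ≤ 2 * (RR s t u u).card + 4 := by
  classical
  set W : Finset G := (II s t).filter (fun c => s.mul u c ∈ II s t) with hW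
  set φ : G → G × G := fun c => if s.mul u c = t.mul u c then (u, s.mul u c) else (u, c) with hφ
  have hmaps : ∀ c ∈ W, φ c ∈ RR s t u u := by
    intro c hc
    obtain ⟨hcI, hvc⟩ := mem_filter.1 hc
    by_cases h : s.mul u c = t.mul u c
    · have hd : s.mul u (s.mul u c) ≠ t.mul u (s.mul u c) :=
        fun h2 => core_row s t hne hval hagr h h2
      simp only [hφ, if_pos h]
      exact mem_filter.2 ⟨mem_product.2 ⟨by simp, hvc⟩, hd⟩
    · simp only [hφ, if_neg h]
      exact mem_filter.2 ⟨mem_product.2 ⟨by simp, hcI⟩, h⟩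
  have hfib : ∀ b, ∃ x y, ∀ c ∈ W, φ c = b → c = x ∨ c = y := by
    intro b
    refine ⟨b.2, s.mul (s.inv u) b.2, fun c _ hc => ?_⟩
    by_cases h : s.mul u c = t.mul u c <;> simp only [hφ, if_pos, if_neg, h, if_true, if_false] at hc
    · right
      have hb2 : t.mul u c = b.2 := congrArg Prod.snd hc
      rw [← h.trans hb2, ← gassoc s, ginv_mul s, gone_mul s]
    · left
      exact congrArg Prod.snd hc
  have h1 : W.card ≤ 2 * (RR s t u u).card := card_le_two_mul hmaps hfib
  have h2 : (II s t).card ≤ W.card + 2 := W_card s t hne u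
  have h3 := II_card hne
  omega

theorem col_bound_diag (s t : Group G) (hne : s.one ≠ t.one) {u : G}
    (hval : s.mul u u = s.one ∨ s.mul u u = t.one)
    (hagr : s.mul u u = t.mul u u) :
    Fintype.card G ≤ 2 * (CC s t u u).card + 4 := by
  classical
  set W : Finset G := (II s t).filter (fun c => s.mul c u ∈ II s t) with hW
  set φ : G → G × G := fun c => if s.mul c u = t.mul c u then (s.mul c u, u) else (c, u) with hφ
  have hmaps : ∀ c ∈ W, φ c ∈ CC s t u u := by
    intro c hc
    obtain ⟨hcI, hvc⟩ := mem_filter.1 hc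
    by_cases h : s.mul c u = t.mul c u
    · have hd : s.mul (s.mul c u) u ≠ t.mul (s.mul c u) u :=
        fun h2 => core_col s t hne hval hagr h h2
      simp only [hφ, if_pos h]
      exact mem_filter.2 ⟨mem_product.2 ⟨hvc, by simp⟩, hd⟩
    · simp only [hφ, if_neg h]
      exact mem_filter.2 ⟨mem_product.2 ⟨hcI, by simp⟩, h⟩
  have hfib : ∀ b, ∃ x y, ∀ c ∈ W, φ c = b → c = x ∨ c = y := by
    intro b
    refine ⟨b.1, s.mul b.1 (s.inv u), fun c _ hc => ?_⟩
    by_cases h : s.mul c u = t.mul c u <;> simp only [hφ, if_pos, if_neg, h, if_true, if_false] at hc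
    · right
      have hb1 : t.mul c u = b.1 := congrArg Prod.fst hc
      rw [← h.trans hb1, gassoc s, gmul_inv s, gmul_one s]
    · left
      exact congrArg Prod.fst hc
  have h1 : W.card ≤ 2 * (CC s t u u).card := card_le_two_mul hmaps hfib
  have h2 : (II s t).card ≤ W.card + 2 := W'_card s t hne u
  have h3 := II_card hne
  omega

theorem assemble (s t : Group G) {u w : G} (hu : u ∈ II s t) (hw : w ∈ II s t)
    (hR : 2 * Fintype.card G ≤ 2 * (RR s t u w).card + 8)
    (hC : 2 * Fintype.card G ≤ 2 * (CC s t u w).card + 8) :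
    ∃ P : Finset (G × G), P ⊆ II s t ×ˢ II s t ∧
      (∀ p ∈ P, s.mul p.1 p.2 ≠ t.mul p.1 p.2) ∧
      2 * Fintype.card G ≤ P.card + 13 := by
  classical
  refine ⟨RR s t u w ∪ CC s t u w, ?_, ?_, ?_⟩
  · intro p hp
    rcases mem_union.1 hp with hp | hp
    · obtain ⟨hp1, _⟩ := mem_filter.1 hp
      obtain ⟨h1, h2⟩ := mem_product.1 hp1
      refine mem_product.2 ⟨?_, h2⟩
      rcases mem_insert.1 h1 with rfl | h1
      · exact hu
      · rw [mem_singleton.1 h1]; exact hw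
    · obtain ⟨hp1, _⟩ := mem_filter.1 hp
      obtain ⟨h1, h2⟩ := mem_product.1 hp1
      refine mem_product.2 ⟨h1, ?_⟩
      rcases mem_insert.1 h2 with rfl | h2
      · exact hu
      · rw [mem_singleton.1 h2]; exact hw
  · intro p hp
    rcases mem_union.1 hp with hp | hp <;> exact (mem_filter.1 hp).2
  · have hcap : (RR s t u w ∩ CC s t u w).card ≤ 4 := by
      have hsub : RR s t u w ∩ CC s t u w ⊆ ({u, w} : Finset G) ×ˢ ({u, w} : Finset G) := by
        intro p hp
        obtain ⟨hpR, hpC⟩ := mem_inter.1 hp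
        exact mem_product.2 ⟨(mem_product.1 (mem_filter.1 hpR).1).1,
          (mem_product.1 (mem_filter.1 hpC).1).2⟩
      have h2 : ({u, w} : Finset G).card ≤ 2 := (card_insert_le _ _).trans (by simp)
      calc (RR s t u w ∩ CC s t u w).card ≤ (({u, w} : Finset G) ×ˢ ({u, w} : Finset G)).card :=
            card_le_card hsub
        _ = ({u, w} : Finset G).card * ({u, w} : Finset G).card := card_product _ _
        _ ≤ 2 * 2 := Nat.mul_le_mul h2 h2
    have hunion := card_union_add_card_inter (RR s t u w) (CC s t u w)
    omega


theorem key (s t : Group G) (hne : s.one ≠ t.one) :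
    6 * Fintype.card G ≤
      (Finset.univ.filter fun p : G × G => s.mul p.1 p.2 ≠ t.mul p.1 p.2).card + 17 := by
  classical
  set Δ : Finset (G × G) :=
    Finset.univ.filter (fun p : G × G => s.mul p.1 p.2 ≠ t.mul p.1 p.2) with hΔ
  -- the two inverse lines
  set A1 : Finset G := (II s t).filter (fun a => s.inv a ∈ II s t) with hA1
  set L1 : Finset (G × G) := A1.image (fun a => (a, s.inv a)) with hL1
  set L2 : Finset (G × G) := (II s t).image (fun a => (a, s.mul (s.inv a) t.one)) with hL2
  have hL1mem : ∀ p ∈ L1, p.1 ∈ II s t ∧ p.2 ∈ II s t ∧ s.mul p.1 p.2 = s.one := by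
    intro p hp
    obtain ⟨a, ha, rfl⟩ := mem_image.1 hp
    obtain ⟨ha1, ha2⟩ := mem_filter.1 ha
    exact ⟨ha1, ha2, gmul_inv s a⟩
  have hL2mem : ∀ p ∈ L2, p.1 ∈ II s t ∧ p.2 ∈ II s t ∧ s.mul p.1 p.2 = t.one := by
    intro p hp
    obtain ⟨a, ha, rfl⟩ := mem_image.1 hp
    have hval : s.mul a (s.mul (s.inv a) t.one) = t.one := by
      rw [← gassoc s, gmul_inv s, gone_mul s]
    obtain ⟨hae, haf⟩ := mem_II.1 ha
    refine ⟨ha, mem_II.2 ⟨fun h => ?_, fun h => ?_⟩, hval⟩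
    · replace h : s.mul (s.inv a) t.one = s.one := h
      rw [h, gmul_one s] at hval; exact haf hval
    · replace h : s.mul (s.inv a) t.one = t.one := h
      rw [h] at hval
      exact hae (grcancel s (hval.trans (gone_mul s t.one).symm))
  have hLmem : ∀ p ∈ L1 ∪ L2, p.1 ∈ II s t ∧ p.2 ∈ II s t ∧
      (s.mul p.1 p.2 = s.one ∨ s.mul p.1 p.2 = t.one) := by
    intro p hp
    rcases mem_union.1 hp with hp | hp
    · obtain ⟨h1, h2, h3⟩ := hL1mem p hp; exact ⟨h1, h2, Or.inl h3⟩
    · obtain ⟨h1, h2, h3⟩ := hL2mem p hp; exact ⟨h1, h2, Or.inr h3⟩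
  have hA1card : (II s t).card ≤ A1.card + 1 := by
    have hsub : II s t ⊆ A1 ∪ {s.inv t.one} := by
      intro a ha
      by_cases h : a = s.inv t.one
      · exact mem_union_right _ (by simp [h])
      refine mem_union_left _ (mem_filter.2 ⟨ha, mem_II.2 ⟨fun he => ?_, fun hf => ?_⟩⟩)
      · obtain ⟨hae, _⟩ := mem_II.1 ha
        have := gmul_inv s a
        rw [he, gmul_one s] at this
        exact hae this
      · apply h
        have h1 : s.mul a t.one = s.one := by rw [← hf]; exact gmul_inv s a
        have h2 : s.mul (s.inv t.one) t.one = s.one := ginv_mul s t.one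
        exact grcancel s (h1.trans h2.symm)
    exact (card_le_card hsub).trans ((card_union_le _ _).trans (by simp))
  have hL1card : L1.card = A1.card := by
    rw [hL1]
    exact card_image_of_injective _ (fun a b hab => by simpa using congrArg Prod.fst hab)
  have hL2card : L2.card = (II s t).card := by
    rw [hL2]
    exact card_image_of_injective _ (fun a b hab => by simpa using congrArg Prod.fst hab)
  have hdisjL : Disjoint L1 L2 := by
    rw [disjoint_left]
    intro p h1 h2
    exact hne (((hL1mem p h1).2.2).symm.trans ((hL2mem p h2).2.2))
  have hLcard : (L1 ∪ L2).card = L1.card + L2.card := card_union_of_disjoint hdisjL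
  set Sp : Finset (G × G) :=
    (L1 ∪ L2).filter (fun p => s.mul p.1 p.2 = t.mul p.1 p.2) with hSpDef
  have hIIcard := II_card hne
  -- main case analysis: produce the interior disagreement set P
  have hP : ∃ P : Finset (G × G), P ⊆ II s t ×ˢ II s t ∧
      (∀ p ∈ P, s.mul p.1 p.2 ≠ t.mul p.1 p.2) ∧
      2 * Fintype.card G ≤ P.card + 13 := by
    by_cases h1 : ∃ p ∈ Sp, p.1 ≠ p.2
    · -- a non-diagonal special cell
      obtain ⟨p, hp, hpne⟩ := h1
      obtain ⟨hpL, hagr⟩ := mem_filter.1 hp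
      obtain ⟨hu, hv, hval⟩ := hLmem p hpL
      have hR := row_bound s t hne hpne hval hagr
      have hC := col_bound s t hne hpne hval hagr
      exact assemble s t hu hv (by omega) (by omega)
    · by_cases h2 : 2 ≤ Sp.card
      · -- two diagonal special cells
        obtain ⟨p, hp, q, hq, hpq⟩ := Finset.one_lt_card.1 h2
        push_neg at h1
        have hpd : p.1 = p.2 := h1 p hp
        have hqd : q.1 = q.2 := h1 q hq
        obtain ⟨hpL, hpagr⟩ := mem_filter.1 hp
        obtain ⟨hqL, hqagr⟩ := mem_filter.1 hq
        obtain ⟨hup, _, hvalp⟩ := hLmem p hpL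
        obtain ⟨huq, _, hvalq⟩ := hLmem q hqL
        set u : G := p.1 with hu1
        set w : G := q.1 with hw1
        have huw : u ≠ w := by
          intro h
          apply hpq
          have : p = (p.1, p.2) := rfl
          rw [Prod.ext_iff]
          exact ⟨h, by rw [← hpd, ← hqd, ← h]⟩
        rw [← hpd] at hvalp hpagr
        rw [← hqd] at hvalq hqagr
        have hRu := row_bound_diag s t hne hvalp hpagr
        have hRw := row_bound_diag s t hne hvalq hqagr
        have hCu := col_bound_diag s t hne hvalp hpagr
        have hCw := col_bound_diag s t hne hvalq hqagr
        -- combine the two rows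
        have hRcomb : (RR s t u u).card + (RR s t w w).card ≤ (RR s t u w).card := by
          have hsubu : RR s t u u ⊆ RR s t u w := by
            intro x hx
            obtain ⟨hx1, hx2⟩ := mem_filter.1 hx
            obtain ⟨hxa, hxb⟩ := mem_product.1 hx1
            have : x.1 = u := by rcases mem_insert.1 hxa with h | h; exact h; simpa using h
            exact mem_filter.2 ⟨mem_product.2 ⟨by simp [this], hxb⟩, hx2⟩
          have hsubw : RR s t w w ⊆ RR s t u w := by
            intro x hx
            obtain ⟨hx1, hx2⟩ := mem_filter.1 hx
            obtain ⟨hxa, hxb⟩ := mem_product.1 hx1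
            have : x.1 = w := by rcases mem_insert.1 hxa with h | h; exact h; simpa using h
            exact mem_filter.2 ⟨mem_product.2 ⟨by simp [this], hxb⟩, hx2⟩
          have hdisj : Disjoint (RR s t u u) (RR s t w w) := by
            rw [disjoint_left]
            intro x hxu hxw
            obtain ⟨hx1, _⟩ := mem_filter.1 hxu
            obtain ⟨hy1, _⟩ := mem_filter.1 hxw
            have e1 : x.1 = u := by
              rcases mem_insert.1 (mem_product.1 hx1).1 with h | h; exact h; simpa using h
            have e2 : x.1 = w := by
              rcases mem_insert.1 (mem_product.1 hy1).1 with h | h; exact h; simpa using h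
            exact huw (e1.symm.trans e2)
          calc (RR s t u u).card + (RR s t w w).card
              = (RR s t u u ∪ RR s t w w).card := (card_union_of_disjoint hdisj).symm
            _ ≤ (RR s t u w).card := card_le_card (union_subset hsubu hsubw)
        have hCcomb : (CC s t u u).card + (CC s t w w).card ≤ (CC s t u w).card := by
          have hsubu : CC s t u u ⊆ CC s t u w := by
            intro x hx
            obtain ⟨hx1, hx2⟩ := mem_filter.1 hx
            obtain ⟨hxa, hxb⟩ := mem_product.1 hx1
            have : x.2 = u := by rcases mem_insert.1 hxb with h | h; exact h; simpa using h
            exact mem_filter.2 ⟨mem_product.2 ⟨hxa, by simp [this]⟩, hx2⟩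
          have hsubw : CC s t w w ⊆ CC s t u w := by
            intro x hx
            obtain ⟨hx1, hx2⟩ := mem_filter.1 hx
            obtain ⟨hxa, hxb⟩ := mem_product.1 hx1
            have : x.2 = w := by rcases mem_insert.1 hxb with h | h; exact h; simpa using h
            exact mem_filter.2 ⟨mem_product.2 ⟨hxa, by simp [this]⟩, hx2⟩
          have hdisj : Disjoint (CC s t u u) (CC s t w w) := by
            rw [disjoint_left]
            intro x hxu hxw
            obtain ⟨hx1, _⟩ := mem_filter.1 hxu
            obtain ⟨hy1, _⟩ := mem_filter.1 hxw
            have e1 : x.2 = u := by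
              rcases mem_insert.1 (mem_product.1 hx1).2 with h | h; exact h; simpa using h
            have e2 : x.2 = w := by
              rcases mem_insert.1 (mem_product.1 hy1).2 with h | h; exact h; simpa using h
            exact huw (e1.symm.trans e2)
          calc (CC s t u u).card + (CC s t w w).card
              = (CC s t u u ∪ CC s t w w).card := (card_union_of_disjoint hdisj).symm
            _ ≤ (CC s t u w).card := card_le_card (union_subset hsubu hsubw)
        exact assemble s t hup huq (by omega) (by omega)
      · -- at most one special cell: almost all of L1 ∪ L2 disagrees
        refine ⟨(L1 ∪ L2) \ Sp, ?_, ?_, ?_⟩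
        · intro p hp
          obtain ⟨hpL, _⟩ := mem_sdiff.1 hp
          obtain ⟨hx, hy, _⟩ := hLmem p hpL
          exact mem_product.2 ⟨hx, hy⟩
        · intro p hp
          obtain ⟨hpL, hpS⟩ := mem_sdiff.1 hp
          intro hagr
          exact hpS (mem_filter.2 ⟨hpL, hagr⟩)
        · have hSpsub : Sp ⊆ L1 ∪ L2 := filter_subset _ _
          have hcard := card_sdiff_of_subset hSpsub
          have hsp : Sp.card ≤ 1 := by omega
          omega
  obtain ⟨P, hPsub, hPdis, hPcard⟩ := hP
  -- rows and columns of the two identities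
  set P1 : Finset (G × G) := ({s.one, t.one} : Finset G) ×ˢ (Finset.univ : Finset G) with hP1d
  set P2 : Finset (G × G) := II s t ×ˢ ({s.one, t.one} : Finset G) with hP2d
  have hP1dis : ∀ p ∈ P1, s.mul p.1 p.2 ≠ t.mul p.1 p.2 := by
    intro p hp h
    obtain ⟨h1, _⟩ := mem_product.1 hp
    rcases mem_insert.1 h1 with he | hf
    · rw [he, gone_mul s] at h
      exact hne (grcancel t ((gone_mul t p.2).trans h)).symm
    · rw [mem_singleton.1 hf, gone_mul t] at h
      exact hne (grcancel s (h.trans (gone_mul s p.2).symm)).symm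
  have hP2dis : ∀ p ∈ P2, s.mul p.1 p.2 ≠ t.mul p.1 p.2 := by
    intro p hp h
    obtain ⟨_, h2⟩ := mem_product.1 hp
    rcases mem_insert.1 h2 with he | hf
    · rw [he, gmul_one s] at h
      exact hne (glcancel t ((gmul_one t p.1).trans h)).symm
    · rw [mem_singleton.1 hf, gmul_one t] at h
      exact hne (glcancel s (h.trans (gmul_one s p.1).symm)).symm
  have hsub : P1 ∪ P2 ∪ P ⊆ Δ := by
    intro p hp
    rw [hΔ, mem_filter]
    refine ⟨mem_univ _, ?_⟩
    rcases mem_union.1 hp with hp | hp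
    · rcases mem_union.1 hp with hp | hp
      · exact hP1dis p hp
      · exact hP2dis p hp
    · exact hPdis p hp
  have hd12 : Disjoint P1 P2 := by
    rw [disjoint_left]
    intro p hp1 hp2
    have h1 := (mem_product.1 hp1).1
    have h2 := mem_II.1 (mem_product.1 hp2).1
    rcases mem_insert.1 h1 with he | hf
    · exact h2.1 he
    · exact h2.2 (mem_singleton.1 hf)
  have hd3 : Disjoint (P1 ∪ P2) P := by
    rw [disjoint_left]
    intro p hp1 hpP
    have hPp := mem_product.1 (hPsub hpP)
    have hI1 := mem_II.1 hPp.1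
    have hI2 := mem_II.1 hPp.2
    rcases mem_union.1 hp1 with hp | hp
    · rcases mem_insert.1 (mem_product.1 hp).1 with he | hf
      · exact hI1.1 he
      · exact hI1.2 (mem_singleton.1 hf)
    · rcases mem_insert.1 (mem_product.1 hp).2 with he | hf
      · exact hI2.1 he
      · exact hI2.2 (mem_singleton.1 hf)
  have hcard1 : P1.card = 2 * Fintype.card G := by
    rw [hP1d, card_product, card_univ]
    have : ({s.one, t.one} : Finset G).card = 2 := by
      rw [card_insert_of_notMem (by simp [hne]), card_singleton]
    rw [this]
  have hcard2 : P2.card = (II s t).card * 2 := by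
    rw [hP2d, card_product]
    have : ({s.one, t.one} : Finset G).card = 2 := by
      rw [card_insert_of_notMem (by simp [hne]), card_singleton]
    rw [this]
  have htotal : P1.card + P2.card + P.card ≤ Δ.card := by
    calc P1.card + P2.card + P.card = (P1 ∪ P2).card + P.card := by
          rw [card_union_of_disjoint hd12]
      _ = (P1 ∪ P2 ∪ P).card := (card_union_of_disjoint hd3).symm
      _ ≤ Δ.card := card_le_card hsub
  omega

end Drapal

theorem same_identity_of_close {G : Type*} [Fintype G] [DecidableEq G]
    (s t : Group G) (hn : 7 < Fintype.card G)
    (hiso : ∃ e : G ≃ G, ∀ a b : G, e (s.mul a b) = t.mul (e a) (e b))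
    (hdist : (Finset.univ.filter fun p : G × G => s.mul p.1 p.2 ≠ t.mul p.1 p.2).card
      ≤ 6 * Fintype.card G - 18) :
    s.one = t.one := by
  by_contra hne
  have hkey := Drapal.key s t hne
  omega
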